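/- The n-th Faber polynomial Fₙ(b₁,…,bₙ) equals (−1)ⁿ times the determinant of the n×n matrix Aₙ whose (i,1) entry is i·b_i, whose (i,i+1) entry is 1, whose (i,j) entry for 2 ≤ j ≤ i is b_{i−j+1}, and 0 otherwise; equivalently Fₙ(0) = det(0·I − Aₙ) = (−1)ⁿ det Aₙ. -/

import Mathlib

variable {A : Type*} [CommRing A] [Algebra ℚ A]

/-- Composition `f ∘ g` of formal power series (`g` with zero constant term),
defined coefficientwise. -/
noncomputable def pscomp (f g : PowerSeries A) : PowerSeries A :=
  PowerSeries.mk fun n => ∑ k ∈ Finset.range (n + 1),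
    PowerSeries.coeff k f * PowerSeries.coeff n (g ^ k)

/-- The series `log(1+u) = Σ_{m≥1} (-1)^{m+1} uᵐ/m`. -/
noncomputable def logOneAdd : PowerSeries A :=
  PowerSeries.mk fun m => if m = 0 then 0 else algebraMap ℚ A ((-1) ^ (m + 1) / m)

/-- `h(z) = 1 + b₁z + b₂z² + ⋯`. -/
noncomputable def hSeries (b : ℕ → A) : PowerSeries A :=
  PowerSeries.mk fun n => if n = 0 then 1 else b n

/-- The `n`-th Faber polynomial `Fₙ(b₁,…,bₙ) = Fₙ(0)`, defined by
`-log h(z) = Σ_{n≥1} Fₙ(b₁,…,bₙ) zⁿ/n`. -/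
noncomputable def faber (b : ℕ → A) (n : ℕ) : A :=
  (-(n : ℚ)) • PowerSeries.coeff n (pscomp logOneAdd (hSeries b - 1))

/-- The Hessenberg matrix `Aₙ` with first column `(b₁, 2b₂, …, n·bₙ)ᵀ`, superdiagonal
`1`'s, entries `b_{i-j+1}` below the diagonal (columns `≥ 2`), and `0` elsewhere
(written in `0`-indexed form). -/
noncomputable def faberMatrix (b : ℕ → A) (n : ℕ) : Matrix (Fin n) (Fin n) A :=
  fun i j =>
    if (j : ℕ) = 0 then ((i : ℕ) + 1 : A) * b ((i : ℕ) + 1)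
    else if (j : ℕ) = (i : ℕ) + 1 then 1
    else if (j : ℕ) ≤ (i : ℕ) then b ((i : ℕ) - (j : ℕ) + 1)
    else 0


open PowerSeries Finset

set_option linter.unusedSectionVars false
set_option linter.unreachableTactic false
set_option linter.unusedTactic false
set_option maxHeartbeats 1000000


private lemma coeff_pow_eq_zero' {f : PowerSeries A} (hf : constantCoeff f = 0) :
    ∀ (k : ℕ) {m : ℕ}, m < k → coeff m (f ^ k) = 0 := by
  intro k
  induction k with
  | zero => omega
  | succ k ih =>
    intro m hm
    rw [pow_succ, coeff_mul]
    refine Finset.sum_eq_zero fun x hx => ?_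
    rcases Finset.HasAntidiagonal.mem_antidiagonal.mp hx with h
    rcases lt_or_ge x.1 k with h1 | h1
    · rw [ih h1, zero_mul]
    · have hx2 : x.2 = 0 := by omega
      rw [hx2, coeff_zero_eq_constantCoeff, hf, mul_zero]

lemma coeff_u (b : ℕ → A) (m : ℕ) :
    coeff m (hSeries b - 1) = if m = 0 then 0 else b m := by
  rw [map_sub, hSeries, coeff_mk, coeff_one]
  split_ifs <;> ring

lemma constantCoeff_u (b : ℕ → A) : constantCoeff (hSeries b - 1) = 0 := by
  rw [← coeff_zero_eq_constantCoeff, coeff_u]; simp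

lemma coeff_logOneAdd (k : ℕ) :
    coeff k logOneAdd = algebraMap ℚ A ((-1) ^ (k + 1) / k) := by
  rw [logOneAdd, coeff_mk]
  split_ifs with h
  · subst h; simp
  · rfl

lemma coeff_P (b : ℕ → A) (N q : ℕ) (hq : q ≤ N) :
    coeff q (∑ k ∈ range (N+1), (algebraMap ℚ A ((-1)^(k+1)/(k:ℚ))) • (hSeries b - 1)^k)
      = coeff q (pscomp logOneAdd (hSeries b - 1)) := by
  rw [pscomp, coeff_mk, map_sum]
  rw [← Finset.sum_subset (Finset.range_subset_range.mpr (by omega : q+1 ≤ N+1))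
    (fun k _ hk2 => by
      rw [map_smul,
        coeff_pow_eq_zero' (constantCoeff_u b) k (by simpa using hk2), smul_zero])]
  exact Finset.sum_congr rfl fun k _ => by
    rw [map_smul, coeff_logOneAdd, smul_eq_mul]

lemma deriv_P (b : ℕ → A) (N : ℕ) :
    d⁄dX A (∑ k ∈ range (N+1), (algebraMap ℚ A ((-1)^(k+1)/(k:ℚ))) • (hSeries b - 1)^k)
      = (∑ j ∈ range N, (-(hSeries b - 1))^j) * d⁄dX A (hSeries b - 1) := by
  set u := hSeries b - 1 with hu
  rw [map_sum, Finset.sum_range_succ', Finset.sum_mul]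
  have h0 : d⁄dX A ((algebraMap ℚ A ((-1:ℚ)^(0+1)/((0:ℕ):ℚ))) • u^0) = 0 := by
    rw [pow_zero]
    simp
  rw [h0, add_zero]
  refine Finset.sum_congr rfl fun j _ => ?_
  rw [Derivation.map_smul, Derivation.leibniz_pow, smul_eq_mul]
  have h1 : (j + 1) • (u ^ (j + 1 - 1) * d⁄dX A u) = ((j+1 : ℕ) : A) • (u ^ j * d⁄dX A u) := by
    rw [Nat.cast_smul_eq_nsmul]
    norm_num
  rw [h1, smul_smul]
  have h2 : algebraMap ℚ A ((-1) ^ (j + 1 + 1) / ((j+1:ℕ):ℚ)) * ((j+1:ℕ):A)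
      = ((-1 : A)) ^ j := by
    rw [← map_natCast (algebraMap ℚ A) (j+1), ← map_mul, div_mul_cancel₀]
    · rw [map_pow, map_neg, map_one]
      simp [pow_succ]
    · positivity
  rw [h2, smul_eq_C_mul, map_pow, map_neg, map_one, neg_pow u, ← mul_assoc]

lemma faber_eq' (b : ℕ → A) (n : ℕ) :
    faber b n = -(((n:ℕ):A) * coeff n (pscomp logOneAdd (hSeries b - 1))) := by
  rw [faber, neg_smul, Algebra.smul_def, map_natCast]

lemma faber_rec (b : ℕ → A) (m : ℕ) :
    faber b (m+1) = -(((m+1:ℕ):A) * b (m+1))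
      - ∑ p ∈ range m, b (p+1) * faber b (m-p) := by
  set u := hSeries b - 1 with hu
  set P := ∑ k ∈ range (m+1+1), (algebraMap ℚ A ((-1)^(k+1)/(k:ℚ))) • u^k with hP
  have E : (1 + u) * d⁄dX A P = d⁄dX A u - (-u)^(m+1) * d⁄dX A u := by
    rw [hP, deriv_P b (m+1)]
    have hg := geom_sum_mul (-u) (m+1)
    linear_combination (-(d⁄dX A u)) * hg
  have EC := congrArg (coeff m) E
  rw [map_sub] at EC
  have hz : coeff m ((-u)^(m+1) * d⁄dX A u) = 0 := by
    rw [coeff_mul]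
    refine Finset.sum_eq_zero fun x hx => ?_
    rcases Finset.HasAntidiagonal.mem_antidiagonal.mp hx with h
    rw [coeff_pow_eq_zero' (by rw [map_neg, constantCoeff_u, neg_zero]) (m+1) (by omega),
      zero_mul]
  rw [hz, sub_zero, coeff_mul, Finset.Nat.sum_antidiagonal_eq_sum_range_succ_mk,
    Finset.sum_range_succ'] at EC
  have hdu : coeff m (d⁄dX A u) = ((m:A)+1) * b (m+1) := by
    rw [coeff_derivative, coeff_u]
    simp [mul_comm]
  rw [hdu] at EC
  have h0 : coeff 0 (1+u) * coeff (m-0) (d⁄dX A P) = -faber b (m+1) := by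
    have c1 : coeff 0 (1+u) = 1 := by
      rw [map_add, coeff_u, coeff_one]; simp
    rw [c1, one_mul, Nat.sub_zero, coeff_derivative, hP, coeff_P b (m+1) (m+1) le_rfl,
      faber_eq' b (m+1)]
    push_cast
    ring
  have h1 : ∀ i ∈ range m, coeff (i+1) (1+u) * coeff (m-(i+1)) (d⁄dX A P)
      = -(b (i+1) * faber b (m-i)) := by
    intro i hi
    have him : i < m := Finset.mem_range.mp hi
    have c1 : coeff (i+1) (1+u) = b (i+1) := by
      rw [map_add, coeff_u, coeff_one]; simp
    have hmi : m - (i+1) + 1 = m - i := by omega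
    rw [c1, coeff_derivative, hmi, hP, coeff_P b (m+1) (m-i) (by omega),
      faber_eq' b (m-i)]
    have hc : ((m - (i+1) : ℕ) : A) + 1 = ((m - i : ℕ) : A) := by
      rw [← hmi, Nat.cast_add, Nat.cast_one]
    rw [hc]
    ring
  rw [Finset.sum_congr rfl h1, h0] at EC
  rw [Finset.sum_neg_distrib] at EC
  push_cast at EC ⊢
  linear_combination -EC


lemma succAbove_val {m : ℕ} (j : Fin (m+1)) (c : Fin m) :
    ((j.succAbove c : Fin (m+1)) : ℕ) = if (c:ℕ) < (j:ℕ) then (c:ℕ) else (c:ℕ)+1 := by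
  have hiff : (c.castSucc < j) ↔ ((c:ℕ) < (j:ℕ)) := by rw [Fin.lt_def]; rfl
  rw [Fin.succAbove]
  split_ifs with h1 h2 h2
  · rfl
  · exact absurd (hiff.mp h1) h2
  · exact absurd (hiff.mpr h2) h1
  · rfl

lemma minor_det (b : ℕ → A) (m : ℕ) (j : Fin (m+1)) :
    ((faberMatrix b (m+1)).submatrix (Fin.last m).succAbove j.succAbove).det
      = (faberMatrix b (j:ℕ)).det := by
  have hj : (j:ℕ) ≤ m := Fin.is_le j
  have hadd : (j:ℕ) + (m - (j:ℕ)) = m := by omega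
  set M := (faberMatrix b (m+1)).submatrix (Fin.last m).succAbove j.succAbove with hM
  set e : Fin (j:ℕ) ⊕ Fin (m - (j:ℕ)) ≃ Fin m := finSumFinEquiv.trans (finCongr hadd) with he
  have he1 : ∀ a : Fin (j:ℕ), ((e (Sum.inl a)) : ℕ) = (a:ℕ) := by
    intro a; simp [he]
  have he2 : ∀ a : Fin (m-(j:ℕ)), ((e (Sum.inr a)) : ℕ) = (j:ℕ) + (a:ℕ) := by
    intro a; simp [he]
  have hMval : ∀ (r c : Fin m), M r c =
      if (c:ℕ) < (j:ℕ) then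
        (if (c:ℕ) = 0 then ((r:ℕ)+1 : A) * b ((r:ℕ)+1)
         else if (c:ℕ) = (r:ℕ)+1 then 1
         else if (c:ℕ) ≤ (r:ℕ) then b ((r:ℕ)-(c:ℕ)+1) else 0)
      else (if (c:ℕ) = (r:ℕ) then 1
            else if (c:ℕ) < (r:ℕ) then b ((r:ℕ)-(c:ℕ)) else 0) := by
    intro r c
    have hrow : (((Fin.last m).succAbove r : Fin (m+1)) : ℕ) = (r:ℕ) := by
      rw [Fin.succAbove_last]; rfl
    have hcol := succAbove_val j c
    rw [hM, Matrix.submatrix_apply]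
    simp only [faberMatrix, hrow, hcol]
    split_ifs <;> first
      | rfl
      | omega
      | (exact congrArg b (by omega))
      | (exact (congrArg b (by omega)).symm)
      | simp_all
  let D : Matrix (Fin (m-(j:ℕ))) (Fin (m-(j:ℕ))) A :=
    fun a d => if (d:ℕ) = (a:ℕ) then 1 else if (d:ℕ) < (a:ℕ) then b ((a:ℕ)-(d:ℕ)) else 0
  let C : Matrix (Fin (m-(j:ℕ))) (Fin (j:ℕ)) A := fun a c => M (e (Sum.inr a)) (e (Sum.inl c))
  have hblocks : M.submatrix e e = Matrix.fromBlocks (faberMatrix b (j:ℕ)) 0 C D := by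
    ext r c
    cases r with
    | inl r =>
      cases c with
      | inl c =>
        rw [Matrix.submatrix_apply, hMval, Matrix.fromBlocks_apply₁₁]
        rw [he1, he1, if_pos (lt_of_lt_of_le c.is_lt (le_refl _))]
        simp only [faberMatrix]
      | inr c =>
        rw [Matrix.submatrix_apply, hMval, Matrix.fromBlocks_apply₁₂]
        rw [he1, he2]
        have h1 : ¬ ((j:ℕ) + (c:ℕ) < (j:ℕ)) := by omega
        have hr : (r:ℕ) < (j:ℕ) := r.is_lt
        rw [if_neg h1]
        simp only [Matrix.zero_apply]
        split_ifs <;> first | rfl | omega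
    | inr r =>
      cases c with
      | inl c =>
        rw [Matrix.submatrix_apply, Matrix.fromBlocks_apply₂₁]
      | inr c =>
        rw [Matrix.submatrix_apply, hMval, Matrix.fromBlocks_apply₂₂]
        rw [he2, he2]
        have h1 : ¬ ((j:ℕ) + (c:ℕ) < (j:ℕ)) := by omega
        rw [if_neg h1]
        show _ = D r c
        simp only [D]
        split_ifs <;> first | rfl | omega | (exact congrArg b (by omega))
  have hD : D.det = 1 := by
    have ht : D.BlockTriangular OrderDual.toDual := by
      intro x y hxy
      have : (x:ℕ) < (y:ℕ) := hxy
      simp only [D]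
      rw [if_neg (by omega), if_neg (by omega)]
    rw [Matrix.det_of_lowerTriangular D ht]
    refine Finset.prod_eq_one fun x _ => ?_
    simp [D]
  calc M.det = (M.submatrix e e).det := (Matrix.det_submatrix_equiv_self e M).symm
    _ = (Matrix.fromBlocks (faberMatrix b (j:ℕ)) 0 C D).det := by rw [hblocks]
    _ = (faberMatrix b (j:ℕ)).det * D.det := Matrix.det_fromBlocks_zero₁₂ _ _ _
    _ = (faberMatrix b (j:ℕ)).det := by rw [hD, mul_one]

lemma faberMatrix_last (b : ℕ → A) (m : ℕ) (jj : Fin (m+1)) :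
    faberMatrix b (m+1) (Fin.last m) jj
      = if (jj:ℕ) = 0 then ((m:A)+1) * b (m+1) else b (m+1-(jj:ℕ)) := by
  have hjj : (jj:ℕ) ≤ m := Fin.is_le jj
  have hlast : ((Fin.last m : Fin (m+1)) : ℕ) = m := rfl
  simp only [faberMatrix, hlast]
  split_ifs <;> first
    | rfl
    | omega
    | (exact congrArg b (by omega))
    | simp_all

lemma det_rec (b : ℕ → A) (m : ℕ) :
    (-1:A)^(m+1) * (faberMatrix b (m+1)).det
      = -(((m+1:ℕ):A) * b (m+1))
        - ∑ p ∈ range m, b (p+1) * ((-1:A)^(m-p) * (faberMatrix b (m-p)).det) := by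
  rw [Matrix.det_succ_row (faberMatrix b (m+1)) (Fin.last m), Finset.mul_sum]
  have hterm : ∀ jj : Fin (m+1),
      (-1:A)^(m+1) * ((-1)^(((Fin.last m : Fin (m+1)):ℕ) + (jj:ℕ))
        * faberMatrix b (m+1) (Fin.last m) jj
        * ((faberMatrix b (m+1)).submatrix (Fin.last m).succAbove jj.succAbove).det)
      = -((if (jj:ℕ) = 0 then ((m:A)+1) * b (m+1) else b (m+1-(jj:ℕ)))
          * ((-1:A)^(jj:ℕ) * (faberMatrix b (jj:ℕ)).det)) := by
    intro jj
    rw [minor_det, faberMatrix_last]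
    have hlast : ((Fin.last m : Fin (m+1)) : ℕ) = m := rfl
    rw [hlast]
    have hs : (-1:A)^(m+1) * (-1:A)^(m+(jj:ℕ)) = -(-1:A)^(jj:ℕ) := by
      rw [pow_add, pow_add, pow_one]
      have h2 : (-1:A)^m * (-1:A)^m = 1 := by
        rw [← pow_add]; exact Even.neg_one_pow ⟨m, rfl⟩
      linear_combination (-(-1:A)^(jj:ℕ)) * h2
    linear_combination ((if (jj:ℕ) = 0 then ((m:A)+1) * b (m+1) else b (m+1-(jj:ℕ)))
      * (faberMatrix b (jj:ℕ)).det) * hs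
  rw [Finset.sum_congr rfl (fun jj _ => hterm jj)]
  rw [Fin.sum_univ_eq_sum_range
    (fun i => -((if i = 0 then ((m:A)+1) * b (m+1) else b (m+1-i))
      * ((-1:A)^i * (faberMatrix b i).det))) (m+1), Finset.sum_range_succ']
  have h0 : -((if 0 = 0 then ((m:A)+1) * b (m+1) else b (m+1-0))
      * ((-1:A)^0 * (faberMatrix b 0).det)) = -(((m:A)+1) * b (m+1)) := by
    rw [if_pos rfl, pow_zero, Matrix.det_fin_zero]; ring
  rw [h0]
  have h1 : ∀ i ∈ range m, -((if i+1 = 0 then ((m:A)+1) * b (m+1) else b (m+1-(i+1)))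
      * ((-1:A)^(i+1) * (faberMatrix b (i+1)).det))
      = -(b (m-i) * ((-1:A)^(i+1) * (faberMatrix b (i+1)).det)) := by
    intro i hi
    rw [if_neg (Nat.succ_ne_zero i)]
    congr 2
    exact congrArg b (by omega)
  rw [Finset.sum_congr rfl h1]
  have h2 : ∑ p ∈ range m, b (p+1) * ((-1:A)^(m-p) * (faberMatrix b (m-p)).det)
      = ∑ i ∈ range m, b (m-i) * ((-1:A)^(i+1) * (faberMatrix b (i+1)).det) := by
    rw [← Finset.sum_range_reflect
      (fun i => b (m-i) * ((-1:A)^(i+1) * (faberMatrix b (i+1)).det)) m]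
    refine Finset.sum_congr rfl fun p hp => ?_
    have hpm : p < m := Finset.mem_range.mp hp
    have e1 : m - (m-1-p) = p+1 := by omega
    have e2 : m-1-p+1 = m-p := by omega
    rw [e1, e2]
  rw [h2, Finset.sum_neg_distrib]
  push_cast
  ring

private lemma faber_eq_det_aux (b : ℕ → A) :
    ∀ n, 1 ≤ n → faber b n = (-1:A)^n * (faberMatrix b n).det := by
  intro n
  induction n using Nat.strong_induction_on with
  | _ n ih =>
    intro hn
    obtain ⟨m, rfl⟩ : ∃ m, n = m+1 := ⟨n-1, by omega⟩
    rw [faber_rec, det_rec]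
    congr 1
    refine Finset.sum_congr rfl fun p hp => ?_
    have hpm : p < m := Finset.mem_range.mp hp
    rw [ih (m-p) (by omega) (by omega)]

/-- The `n`-th Faber polynomial equals `(-1)ⁿ det Aₙ`. -/
theorem faber_eq_det (b : ℕ → A) (n : ℕ) (hn : 1 ≤ n) :
    faber b n = (-1) ^ n * (faberMatrix b n).det := by
  exact faber_eq_det_aux b n hn
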